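/- Let n ≥ 2, and for j = 2,…,n define R_j* = Y_j - (1/(n-1))∑_{i=2}^n Y_i, and R_j = Y_j - (1/n)∑_{i=1}^n Y_i. Then for j = 1,…,n-1, R_{j+1} + (1/(√n - 1)) R_1 = R_{j+1}* + (1/√n) R_1*, where R_1* = Y_1 - (1/(n-1))∑_{i=2}^n Y_i. -/

import Mathlib

theorem stmt_19 (n : ℕ) (hn : 2 ≤ n) (Y R Rs : ℕ → ℝ)
    (hR : ∀ j, R j = Y j - (∑ i ∈ Finset.range n, Y i) / n)
    (hRs : ∀ j, Rs j = Y j - (∑ i ∈ Finset.Ico 1 n, Y i) / ((n : ℝ) - 1)) :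
    ∀ j < n - 1,
      R (j + 1) + (1 / (Real.sqrt n - 1)) * R 0 =
        Rs (j + 1) + (1 / Real.sqrt n) * Rs 0 := by
  intro j hj
  have hsplit : (∑ i ∈ Finset.range n, Y i) = Y 0 + ∑ i ∈ Finset.Ico 1 n, Y i := by
    rw [Finset.range_eq_Ico, Finset.sum_eq_sum_Ico_succ_bot (by omega : 0 < n)]
  set T := ∑ i ∈ Finset.Ico 1 n, Y i with hT
  set s := Real.sqrt n with hs
  have hs2 : s * s = n := Real.mul_self_sqrt (by positivity)
  have hn2 : (2:ℝ) ≤ n := by exact_mod_cast hn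
  have hs1 : 1 < s := by
    nlinarith [Real.sqrt_nonneg (n:ℝ)]
  have h1 : s - 1 ≠ 0 := by linarith
  have h2 : s ≠ 0 := by linarith
  have h3 : (n:ℝ) ≠ 0 := by linarith
  have h4 : (n:ℝ) - 1 ≠ 0 := by linarith
  have h5 : s * s - 1 ≠ 0 := by rw [hs2]; exact h4
  rw [hR, hR, hRs, hRs, hsplit, ← hs2]
  have h6 : s ^ 2 - 1 ≠ 0 := by rw [sq]; exact h5
  field_simp
  ring
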